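/- Let n be a positive integer and p ∈ ℝ[t]. Then p ∈ 𝒫ₙ^{mon} (i.e., p(A) is entrywise nonnegative for every entrywise nonnegative n-by-n monomial matrix A) if and only if p_{(r,k)} ∈ 𝒫₁ for every k ∈ {1,…,n} and every r ∈ {0,…,k−1}. -/

import Mathlib

open Matrix

/-- The `r mod k`-part of `p`: `p_{(r,k)}(t) := Σ_{j ≤ deg p, j mod k = r} a_j t^j`. -/
noncomputable def polyPart (p : Polynomial ℝ) (k r : ℕ) : Polynomial ℝ :=
  ∑ j ∈ Finset.range (p.natDegree + 1),
    if j % k = r then Polynomial.C (p.coeff j) * Polynomial.X ^ j else 0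

/-- `A` is a monomial (generalized permutation) matrix: `A = D P` with `D` an
invertible diagonal matrix and `P` a permutation matrix. -/
def IsMonomialMatrix {n : ℕ} (A : Matrix (Fin n) (Fin n) ℝ) : Prop :=
  ∃ (d : Fin n → ℝ) (σ : Equiv.Perm (Fin n)),
    (∀ i, d i ≠ 0) ∧ A = Matrix.diagonal d * σ.permMatrix ℝ

lemma monomial_apply {n : ℕ} (d : Fin n → ℝ) (σ : Equiv.Perm (Fin n)) (i j : Fin n) :
    (Matrix.diagonal d * σ.permMatrix ℝ) i j = if σ i = j then d i else 0 := by
  simp [Matrix.diagonal_mul, Equiv.Perm.permMatrix, PEquiv.toMatrix_apply,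
    Equiv.toPEquiv_apply, Option.mem_def, mul_ite, eq_comm]

lemma monomial_pow_apply {n : ℕ} (d : Fin n → ℝ) (σ : Equiv.Perm (Fin n)) (m : ℕ) (i j : Fin n) :
    ((Matrix.diagonal d * σ.permMatrix ℝ) ^ m) i j =
      if (σ ^ m) i = j then ∏ t ∈ Finset.range m, d ((σ ^ t) i) else 0 := by
  induction m generalizing j with
  | zero => simp [Matrix.one_apply]
  | succ m ih =>
    rw [pow_succ, Matrix.mul_apply]
    have : ∀ l, ((Matrix.diagonal d * σ.permMatrix ℝ) ^ m) i l *
        (Matrix.diagonal d * σ.permMatrix ℝ) l j =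
        if (σ ^ m) i = l then (∏ t ∈ Finset.range m, d ((σ ^ t) i)) *
          (if σ l = j then d l else 0) else 0 := by
      intro l; rw [ih, monomial_apply, ite_mul, zero_mul]
    simp_rw [this]
    rw [Finset.sum_ite_eq (Finset.univ) ((σ ^ m) i)]
    simp only [Finset.mem_univ, if_true]
    rw [Finset.prod_range_succ]
    by_cases h : σ ((σ ^ m) i) = j
    · have : (σ ^ (m+1)) i = j := by rw [pow_succ', Equiv.Perm.mul_apply]; exact h
      rw [if_pos h, if_pos this]
    · have : ¬ (σ ^ (m+1)) i = j := by rw [pow_succ', Equiv.Perm.mul_apply]; exact h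
      rw [if_neg h, if_neg this, mul_zero]

lemma aeval_entry {n : ℕ} (A : Matrix (Fin n) (Fin n) ℝ) (p : Polynomial ℝ) (i j : Fin n) :
    Polynomial.aeval A p i j =
      ∑ m ∈ Finset.range (p.natDegree + 1), p.coeff m * ((A ^ m) i j) := by
  rw [Polynomial.aeval_eq_sum_range]
  simp [Matrix.sum_apply]

lemma polyPart_eval (p : Polynomial ℝ) (k r : ℕ) (t : ℝ) :
    (polyPart p k r).eval t =
      ∑ m ∈ Finset.range (p.natDegree + 1), if m % k = r then p.coeff m * t ^ m else 0 := by
  simp [polyPart, Polynomial.eval_finset_sum, apply_ite (Polynomial.eval t)]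

def cycPerm (n k : ℕ) (hk : 0 < k) (hkn : k ≤ n) : Equiv.Perm (Fin n) where
  toFun x := if (x:ℕ) < k then ⟨((x:ℕ)+1) % k, lt_of_lt_of_le (Nat.mod_lt _ hk) hkn⟩ else x
  invFun x := if (x:ℕ) < k then ⟨((x:ℕ)+(k-1)) % k, lt_of_lt_of_le (Nat.mod_lt _ hk) hkn⟩ else x
  left_inv x := by
    by_cases h : (x:ℕ) < k
    · have h1 : (((x:ℕ)+1) % k) < k := Nat.mod_lt _ hk
      simp only [h, if_true, h1]
      apply Fin.ext
      show (((x:ℕ)+1) % k + (k-1)) % k = x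
      rw [Nat.mod_add_mod]
      have h2 : (x:ℕ)+1+(k-1) = x + k := by omega
      rw [h2, Nat.add_mod_right, Nat.mod_eq_of_lt h]
    · simp [h]
  right_inv x := by
    by_cases h : (x:ℕ) < k
    · have h1 : (((x:ℕ)+(k-1)) % k) < k := Nat.mod_lt _ hk
      simp only [h, if_true, h1]
      apply Fin.ext
      show (((x:ℕ)+(k-1)) % k + 1) % k = x
      rw [Nat.mod_add_mod]
      have h2 : (x:ℕ)+(k-1)+1 = x + k := by omega
      rw [h2, Nat.add_mod_right, Nat.mod_eq_of_lt h]
    · simp [h]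

lemma cycPerm_pow_apply (n k : ℕ) (hk : 0 < k) (hkn : k ≤ n) (hn : 0 < n) (m : ℕ) :
    ((cycPerm n k hk hkn) ^ m) ⟨0, hn⟩ = ⟨m % k, lt_of_lt_of_le (Nat.mod_lt _ hk) hkn⟩ := by
  induction m with
  | zero => simp
  | succ m ih =>
    rw [pow_succ', Equiv.Perm.mul_apply, ih]
    show (if (m % k) < k then _ else _) = _
    rw [if_pos (Nat.mod_lt _ hk)]
    apply Fin.ext
    show (m % k + 1) % k = (m+1) % k
    rw [Nat.mod_add_mod]

/-- Let `n ≥ 1` and `p ∈ ℝ[t]`. Then `p ∈ 𝒫ₙ^{mon}` (i.e., `p(A)` is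
entrywise nonnegative for every entrywise nonnegative `n`-by-`n` monomial matrix `A`)
if and only if `p_{(r,k)} ∈ 𝒫₁` for every `k ∈ {1,…,n}` and every `r ∈ {0,…,k-1}`. -/
theorem mem_Pn_mon_iff_polyPart (n : ℕ) (hn : 0 < n) (p : Polynomial ℝ) :
    (∀ A : Matrix (Fin n) (Fin n) ℝ, IsMonomialMatrix A → (∀ i j, 0 ≤ A i j) →
        ∀ i j, 0 ≤ Polynomial.aeval A p i j) ↔
      (∀ k, 1 ≤ k → k ≤ n → ∀ r < k, ∀ a : ℝ, 0 ≤ a → 0 ≤ (polyPart p k r).eval a) := by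
  constructor
  · -- forward direction
    intro hA k hk1 hkn r hrk a ha
    have hk0 : 0 < k := hk1
    have hpos : ∀ t : ℝ, 0 < t → 0 ≤ (polyPart p k r).eval t := by
      intro t ht
      set σ := cycPerm n k hk0 hkn with hσ
      set d : Fin n → ℝ := fun _ => t with hd
      set A := Matrix.diagonal d * σ.permMatrix ℝ with hAdef
      have hmono : IsMonomialMatrix A := ⟨d, σ, fun _ => ht.ne', rfl⟩
      have hnn : ∀ i j, 0 ≤ A i j := by
        intro i j; rw [hAdef, monomial_apply]
        split
        · exact ht.le
        · exact le_rfl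
      have key := hA A hmono hnn ⟨0, hn⟩ ⟨r, lt_of_lt_of_le hrk hkn⟩
      have heq : Polynomial.aeval A p ⟨0, hn⟩ ⟨r, lt_of_lt_of_le hrk hkn⟩
          = (polyPart p k r).eval t := by
        rw [aeval_entry, polyPart_eval]
        refine Finset.sum_congr rfl fun m _ => ?_
        rw [hAdef, monomial_pow_apply, cycPerm_pow_apply n k hk0 hkn hn m]
        have hprod : (∏ u ∈ Finset.range m, d ((σ ^ u) ⟨0, hn⟩)) = t ^ m := by
          simp [hd]
        rw [hprod]
        by_cases h : m % k = r
        · rw [if_pos (by exact Fin.ext h), if_pos h]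
        · rw [if_neg (by simpa [Fin.ext_iff] using h), if_neg h, mul_zero]
      rw [heq] at key
      exact key
    rcases eq_or_lt_of_le ha with h0 | h0
    · -- a = 0, by continuity
      have hcont : Filter.Tendsto (fun t => (polyPart p k r).eval t)
          (nhdsWithin 0 (Set.Ioi 0)) (nhds ((polyPart p k r).eval 0)) :=
        ((polyPart p k r).continuous.tendsto 0).mono_left nhdsWithin_le_nhds
      have hev : ∀ᶠ t in nhdsWithin (0:ℝ) (Set.Ioi 0), 0 ≤ (polyPart p k r).eval t :=
        eventually_nhdsWithin_of_forall fun t ht => hpos t ht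
      rw [← h0]
      exact ge_of_tendsto hcont hev
    · exact hpos a h0
  · -- backward direction
    intro hparts A hmono hnn i j
    obtain ⟨d, σ, hd, rfl⟩ := hmono
    have hd' : ∀ l, 0 < d l := by
      intro l
      have h1 := hnn l (σ l)
      rw [monomial_apply, if_pos rfl] at h1
      exact lt_of_le_of_ne h1 (Ne.symm (hd l))
    set k := Function.minimalPeriod (⇑σ) i with hkdef
    have hper : Function.IsPeriodicPt (⇑σ) (orderOf σ) i := by
      show (⇑σ)^[orderOf σ] i = i
      rw [Equiv.Perm.iterate_eq_pow, pow_orderOf_eq_one]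
      rfl
    have hk0 : 0 < k := hper.minimalPeriod_pos (orderOf_pos σ)
    have hkper : (σ ^ k) i = i := Function.isPeriodicPt_minimalPeriod (⇑σ) i
    have hmod : ∀ m, (σ ^ m) i = (σ ^ (m % k)) i := by
      intro m
      have := Function.iterate_mod_minimalPeriod_eq (f := ⇑σ) (x := i) (n := m)
      simpa only [Equiv.Perm.iterate_eq_pow] using this.symm
    have hinj : Set.InjOn (fun u => (σ ^ u) i) (Set.Iio k) := by
      have := Function.iterate_injOn_Iio_minimalPeriod (f := ⇑σ) (x := i)
      simpa only [Equiv.Perm.iterate_eq_pow] using this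
    have hkn : k ≤ n := by
      have hinjf : Function.Injective (fun u : Fin k => (σ ^ (u:ℕ)) i) := by
        intro a b hab
        exact Fin.ext (hinj (Set.mem_Iio.mpr a.2) (Set.mem_Iio.mpr b.2) hab)
      calc k = Fintype.card (Fin k) := (Fintype.card_fin k).symm
        _ ≤ Fintype.card (Fin n) := Fintype.card_le_of_injective _ hinjf
        _ = n := Fintype.card_fin n
    by_cases hex : ∃ m, (σ ^ m) i = j
    · set r := Nat.find hex with hrdef
      have hr : (σ ^ r) i = j := Nat.find_spec hex
      have hrk : r < k := by
        have h1 : (σ ^ (r % k)) i = j := by rw [← hmod]; exact hr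
        have h2 : r ≤ r % k := Nat.find_min' hex h1
        have h3 := Nat.mod_le r k
        have h4 := Nat.mod_lt r hk0
        omega
      have hiff : ∀ m, (σ ^ m) i = j ↔ m % k = r := by
        intro m
        constructor
        · intro h
          have h1 : (σ ^ (m % k)) i = j := by rw [← hmod]; exact h
          exact hinj (Set.mem_Iio.mpr (Nat.mod_lt m hk0)) (Set.mem_Iio.mpr hrk)
            (h1.trans hr.symm)
        · intro h; rw [hmod m, h]; exact hr
      set c : ℕ → ℝ := fun m => ∏ u ∈ Finset.range m, d ((σ ^ u) i) with hc
      have hcpos : ∀ m, 0 < c m := fun m => Finset.prod_pos fun u _ => hd' _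
      set b := c k with hbdef
      have hb : 0 < b := hcpos k
      have hdper : ∀ m, d ((σ ^ (m + k)) i) = d ((σ ^ m) i) := by
        intro m
        congr 1
        rw [pow_add, Equiv.Perm.mul_apply, hkper]
      have hckey : ∀ m, c (m + k) = c m * b := by
        intro m
        induction m with
        | zero => simp [hc, hbdef]
        | succ m ih =>
          have e1 : m + 1 + k = (m + k) + 1 := by omega
          rw [e1]
          show (∏ u ∈ Finset.range ((m+k)+1), d ((σ ^ u) i)) = c (m+1) * b
          rw [Finset.prod_range_succ]
          rw [show (∏ u ∈ Finset.range (m+k), d ((σ ^ u) i)) = c (m+k) from rfl, ih,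
            hdper m, show c (m+1) = c m * d ((σ ^ m) i) from Finset.prod_range_succ _ _]
          ring
      set s : ℝ := b ^ ((k:ℝ)⁻¹) with hsdef
      have hs : 0 < s := Real.rpow_pos_of_pos hb _
      have hsk : s ^ k = b := by
        rw [hsdef, ← Real.rpow_natCast (b ^ ((k:ℝ)⁻¹)) k, ← Real.rpow_mul hb.le,
          inv_mul_cancel₀ (by exact_mod_cast hk0.ne' : (k:ℝ) ≠ 0), Real.rpow_one]
      have hcq : ∀ q, c (r + q * k) = c r * s ^ (q * k) := by
        intro q
        induction q with
        | zero => simp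
        | succ q ih =>
          have e : r + (q+1)*k = (r + q*k) + k := by ring
          rw [e, hckey, ih, ← hsk, show (q+1)*k = q*k + k from by ring, pow_add]
          ring
      have hcm : ∀ m, m % k = r → c m = c r * s ^ (m - r) := by
        intro m hm
        obtain ⟨q, hq⟩ : ∃ q, m = r + q * k := by
          refine ⟨m / k, ?_⟩
          rw [← hm]
          exact (Nat.mod_add_div' m k).symm
        subst hq
        rw [hcq q]
        congr 2
        omega
      have key : Polynomial.aeval (Matrix.diagonal d * σ.permMatrix ℝ) p i j
          = (c r / s ^ r) * (polyPart p k r).eval s := by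
        rw [aeval_entry, polyPart_eval, Finset.mul_sum]
        refine Finset.sum_congr rfl fun m _ => ?_
        rw [monomial_pow_apply]
        by_cases h : m % k = r
        · rw [if_pos ((hiff m).mpr h), if_pos h,
            show (∏ u ∈ Finset.range m, d ((σ ^ u) i)) = c m from rfl, hcm m h]
          have hrm : r ≤ m := h ▸ Nat.mod_le m k
          rw [pow_sub₀ s hs.ne' hrm]
          field_simp
        · rw [if_neg (fun hcon => h ((hiff m).mp hcon)), if_neg h, mul_zero, mul_zero]
      rw [key]
      exact mul_nonneg (div_nonneg (hcpos r).le (pow_nonneg hs.le r))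
        (hparts k hk0 hkn r hrk s hs.le)
    · push_neg at hex
      rw [aeval_entry]
      apply Finset.sum_nonneg
      intro m _
      rw [monomial_pow_apply, if_neg (hex m), mul_zero]
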